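/- Let M be a free ℤ-module of finite rank m and p a prime. Then the highest power of p dividing the index |S'_p(M)/S''_p(M)| is exactly p^m. -/

import Mathlib

/-- The linear map on the `n`-th tensor power `Tⁿ(M)` permuting the factors by
`σ`: it sends `x₁ ⊗ ⋯ ⊗ xₙ` to `x_{σ⁻¹(1)} ⊗ ⋯ ⊗ x_{σ⁻¹(n)}`. -/
noncomputable def permMap (A M : Type*) [CommRing A] [AddCommGroup M] [Module A M]
    (n : ℕ) (σ : Equiv.Perm (Fin n)) :
    PiTensorProduct A (fun _ : Fin n => M) →ₗ[A] PiTensorProduct A (fun _ : Fin n => M) :=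
  (PiTensorProduct.reindex A (fun _ : Fin n => M) σ).toLinearMap

/-- `S'ₙ(M)`: the submodule of symmetric tensors in `Tⁿ(M)`. -/
noncomputable def symTensors (A M : Type*) [CommRing A] [AddCommGroup M] [Module A M]
    (n : ℕ) : Submodule A (PiTensorProduct A (fun _ : Fin n => M)) :=
  ⨅ σ : Equiv.Perm (Fin n), LinearMap.eqLocus (permMap A M n σ) LinearMap.id

/-- The symmetrization map `z ↦ ∑_{σ ∈ Sₙ} σ z` on `Tⁿ(M)`. -/
noncomputable def symmetrize (A M : Type*) [CommRing A] [AddCommGroup M] [Module A M]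
    (n : ℕ) :
    PiTensorProduct A (fun _ : Fin n => M) →ₗ[A] PiTensorProduct A (fun _ : Fin n => M) :=
  ∑ σ : Equiv.Perm (Fin n), permMap A M n σ

/-- `Pₙ(M)`: the submodule of `Tⁿ(M)` generated by the `n`-th tensor powers
`x ⊗ ⋯ ⊗ x` of elements `x ∈ M`. -/
noncomputable def powersSubmodule (A M : Type*) [CommRing A] [AddCommGroup M] [Module A M]
    (n : ℕ) : Submodule A (PiTensorProduct A (fun _ : Fin n => M)) :=
  Submodule.span A {z | ∃ x : M, z = PiTensorProduct.tprod A (fun _ : Fin n => x)}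

set_option linter.dupNamespace false

namespace Stmt14

open Finset Equiv

/-! ### Part A: the coordinate picture -/

section Coord

variable (m p : ℕ)

abbrev A' (m p : ℕ) := Fin p → Fin m
abbrev F' (m p : ℕ) := A' m p → ℤ

/-- coordinate permutation action -/
noncomputable def PL (σ : Equiv.Perm (Fin p)) : F' m p →ₗ[ℤ] F' m p :=
  LinearMap.funLeft ℤ ℤ (fun g => g ∘ ⇑σ)

noncomputable def SF : Submodule ℤ (F' m p) :=
  ⨅ σ : Equiv.Perm (Fin p), LinearMap.eqLocus (PL m p σ) LinearMap.id

noncomputable def SigF : F' m p →ₗ[ℤ] F' m p := ∑ σ : Equiv.Perm (Fin p), PL m p σ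

lemma PL_apply (σ : Equiv.Perm (Fin p)) (x : F' m p) (f : A' m p) :
    PL m p σ x f = x (f ∘ ⇑σ) := rfl

lemma mem_SF {x : F' m p} :
    x ∈ SF m p ↔ ∀ (σ : Equiv.Perm (Fin p)) (f : A' m p), x (f ∘ ⇑σ) = x f := by
  simp only [SF, Submodule.mem_iInf, LinearMap.mem_eqLocus, LinearMap.id_coe, id_eq,
    funext_iff, PL_apply]

lemma SigF_apply (x : F' m p) (f : A' m p) :
    SigF m p x f = ∑ σ : Equiv.Perm (Fin p), x (f ∘ ⇑σ) := by
  simp [SigF, LinearMap.sum_apply, PL_apply]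

instance osetoid : Setoid (A' m p) where
  r f g := ∃ σ : Equiv.Perm (Fin p), f = g ∘ ⇑σ
  iseqv := by
    constructor
    · exact fun f => ⟨1, by simp⟩
    · rintro f g ⟨σ, rfl⟩
      exact ⟨σ⁻¹, by funext x; simp⟩
    · rintro f g h ⟨σ, rfl⟩ ⟨τ, rfl⟩
      exact ⟨τ * σ, by funext x; simp [Equiv.Perm.mul_apply]⟩

abbrev Orb (m p : ℕ) := Quotient (osetoid m p)

noncomputable instance : Fintype (Orb m p) := Fintype.ofFinite _

noncomputable def stabCard (f : A' m p) : ℕ :=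
  (Finset.univ.filter (fun σ : Equiv.Perm (Fin p) => f ∘ ⇑σ = f)).card

noncomputable def nn (ω : Orb m p) : ℕ := stabCard m p ω.out

lemma stabCard_pos (f : A' m p) : 0 < stabCard m p f := by
  apply Finset.card_pos.mpr
  exact ⟨1, by simp⟩

lemma card_coset (f : A' m p) (τ : Equiv.Perm (Fin p)) :
    (Finset.univ.filter fun σ : Equiv.Perm (Fin p) => f ∘ ⇑σ = f ∘ ⇑τ).card
      = stabCard m p f := by
  classical
  apply Finset.card_bij' (fun σ _ => σ * τ⁻¹) (fun ρ _ => ρ * τ)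
  · intro σ hσ
    simp only [Finset.mem_filter, Finset.mem_univ, true_and] at hσ ⊢
    funext x
    have h1 := congrFun hσ (τ⁻¹ x)
    simpa [Equiv.Perm.mul_apply] using h1
  · intro ρ hρ
    simp only [Finset.mem_filter, Finset.mem_univ, true_and] at hρ ⊢
    funext x
    have h1 := congrFun hρ (τ x)
    simpa [Equiv.Perm.mul_apply] using h1
  · intro σ _; group
  · intro ρ _; group

lemma sum_perm (x : F' m p) (f : A' m p) :
    ∑ σ : Equiv.Perm (Fin p), x (f ∘ ⇑σ)
      = (stabCard m p f : ℤ) *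
        ∑ g ∈ Finset.univ.image (fun σ : Equiv.Perm (Fin p) => f ∘ ⇑σ), x g := by
  classical
  rw [← Finset.sum_fiberwise_of_maps_to
    (g := fun σ : Equiv.Perm (Fin p) => f ∘ ⇑σ)
    (fun σ _ => Finset.mem_image_of_mem (fun σ : Equiv.Perm (Fin p) => f ∘ ⇑σ)
      (Finset.mem_univ σ))
    (fun σ => x (f ∘ ⇑σ)), Finset.mul_sum]
  refine Finset.sum_congr rfl fun g hg => ?_
  obtain ⟨τ, _, rfl⟩ := Finset.mem_image.mp hg
  have : ∀ σ ∈ Finset.univ.filter (fun σ : Equiv.Perm (Fin p) => f ∘ ⇑σ = f ∘ ⇑τ),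
      x (f ∘ ⇑σ) = x (f ∘ ⇑τ) := by
    intro σ hσ
    rw [(Finset.mem_filter.mp hσ).2]
  rw [Finset.sum_congr rfl this, Finset.sum_const, card_coset, nsmul_eq_mul]

lemma SigF_mem_SF (x : F' m p) : SigF m p x ∈ SF m p := by
  rw [mem_SF]
  intro τ f
  rw [SigF_apply, SigF_apply]
  refine Fintype.sum_equiv (Equiv.mulLeft τ) _ _ fun σ => ?_
  congr 1

noncomputable def eOrb : (SF m p) ≃ₗ[ℤ] (Orb m p → ℤ) where
  toFun x ω := x.1 ω.out
  map_add' x y := rfl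
  map_smul' c x := rfl
  invFun c := ⟨fun f => c ⟦f⟧, by
    rw [mem_SF]
    intro σ f
    have : (⟦f ∘ ⇑σ⟧ : Orb m p) = ⟦f⟧ := Quotient.sound ⟨σ, rfl⟩
    rw [this]⟩
  left_inv x := by
    apply Subtype.ext
    funext f
    obtain ⟨σ, hσ⟩ := Quotient.mk_out (s := osetoid m p) f
    show x.1 (⟦f⟧ : Orb m p).out = x.1 f
    rw [hσ]
    exact (mem_SF m p).mp x.2 σ f
  right_inv c := funext fun ω => congrArg c (Quotient.out_eq ω)

lemma map_eOrb :
    (Submodule.comap (SF m p).subtype (LinearMap.range (SigF m p))).map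
        ((eOrb m p : (SF m p) →ₗ[ℤ] (Orb m p → ℤ)))
      = Submodule.pi Set.univ (fun ω : Orb m p => Ideal.span {(nn m p ω : ℤ)}) := by
  classical
  ext c
  simp only [Submodule.mem_map, Submodule.mem_comap, LinearMap.mem_range,
    Submodule.mem_pi, Set.mem_univ, forall_true_left, Ideal.mem_span_singleton]
  constructor
  · rintro ⟨y, ⟨x, hx⟩, rfl⟩ ω
    have : (eOrb m p : (SF m p) →ₗ[ℤ] (Orb m p → ℤ)) y ω = y.1 ω.out := rfl
    have hx' : (SigF m p) x = (y : F' m p) := hx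
    rw [this, ← hx', SigF_apply, sum_perm]
    exact Dvd.intro _ rfl
  · intro hc
    set d : Orb m p → ℤ := fun ω => c ω / (nn m p ω) with hdset
    have hd : ∀ ω, c ω = (nn m p ω) * d ω := fun ω => (Int.mul_ediv_cancel' (hc ω)).symm
    set x : F' m p := fun f => if f = (⟦f⟧ : Orb m p).out then d ⟦f⟧ else 0 with hxset
    refine ⟨⟨SigF m p x, SigF_mem_SF m p x⟩, ⟨x, rfl⟩, funext fun ω => ?_⟩
    have key : ∀ σ : Equiv.Perm (Fin p),
        x (ω.out ∘ ⇑σ) = if ω.out ∘ ⇑σ = ω.out then d ω else 0 := by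
      intro σ
      have h1 : (⟦ω.out ∘ ⇑σ⟧ : Orb m p) = ω := by
        rw [Quotient.sound (⟨σ, rfl⟩ : (ω.out ∘ ⇑σ) ≈ ω.out), Quotient.out_eq]
      rw [hxset]
      simp only [h1]
    show SigF m p x ω.out = c ω
    rw [SigF_apply, Finset.sum_congr rfl (fun σ _ => key σ), Finset.sum_ite,
      Finset.sum_const, Finset.sum_const_zero, add_zero]
    have h2 : (Finset.univ.filter fun σ : Equiv.Perm (Fin p) => ω.out ∘ ⇑σ = ω.out).card
        = nn m p ω := by
      have := card_coset m p ω.out 1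
      simpa [nn] using this
    rw [h2, hd ω, nsmul_eq_mul]

lemma card_SFquot :
    Nat.card ((SF m p) ⧸ Submodule.comap (SF m p).subtype (LinearMap.range (SigF m p)))
      = ∏ ω : Orb m p, nn m p ω := by
  classical
  have e1 := Submodule.Quotient.equiv
    (Submodule.comap (SF m p).subtype (LinearMap.range (SigF m p)))
    (Submodule.pi Set.univ (fun ω : Orb m p => Ideal.span {(nn m p ω : ℤ)}))
    (eOrb m p) (map_eOrb m p)
  have e2 := Submodule.quotientPi (fun ω : Orb m p => Ideal.span {(nn m p ω : ℤ)})
  rw [Nat.card_congr (e1.toEquiv.trans e2.toEquiv), Nat.card_pi]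
  refine Finset.prod_congr rfl fun ω _ => ?_
  rw [Nat.card_congr (Int.quotientSpanNatEquivZMod (nn m p ω)).toEquiv, Nat.card_zmod]

/-! ### Part C: arithmetic of the index -/

def IsConstF (f : A' m p) : Prop := ∃ i, ∀ j, f j = i

lemma stab_const (f : A' m p) (h : IsConstF m p f) :
    stabCard m p f = Nat.factorial p := by
  obtain ⟨i, hi⟩ := h
  have : (Finset.univ.filter (fun σ : Equiv.Perm (Fin p) => f ∘ ⇑σ = f)) = Finset.univ := by
    refine Finset.eq_univ_of_forall fun σ => ?_
    simp only [Finset.mem_filter, Finset.mem_univ, true_and]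
    funext j
    rw [Function.comp_apply, hi (σ j), hi j]
  rw [stabCard, this, Finset.card_univ, Fintype.card_perm, Fintype.card_fin]

lemma factorization_factorial_self (hp : p.Prime) :
    (Nat.factorial p).factorization p = 1 := by
  obtain ⟨q, rfl⟩ : ∃ q, p = q + 1 := ⟨p - 1, by have := hp.pos; omega⟩
  have h2 : ¬ (q + 1) ∣ Nat.factorial q := by
    rw [hp.dvd_factorial]
    omega
  rw [Nat.factorial_succ, Nat.factorization_mul (by omega) (Nat.factorial_ne_zero _)]
  simp [hp.factorization, Nat.factorization_eq_zero_of_not_dvd h2]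

lemma fix_zpow (f : A' m p) (σ : Equiv.Perm (Fin p)) (hσ : f ∘ ⇑σ = f) :
    ∀ (i : ℤ) (z : Fin p), f ((σ ^ i) z) = f z := by
  have h1 : ∀ z, f (σ z) = f z := fun z => congrFun hσ z
  have hn : ∀ (n : ℕ) (z : Fin p), f ((σ ^ n) z) = f z := by
    intro n
    induction n with
    | zero => simp
    | succ k ih =>
      intro z
      rw [pow_succ, Equiv.Perm.mul_apply, ih (σ z), h1 z]
  intro i z
  cases i with
  | ofNat n => simpa using hn n z
  | negSucc n =>
    rw [zpow_negSucc]
    have := hn (n + 1) (((σ ^ (n + 1))⁻¹ : Equiv.Perm (Fin p)) z)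
    rw [Equiv.Perm.inv_def, Equiv.apply_symm_apply] at this
    exact this.symm

lemma stab_nonconst (hp : p.Prime) (f : A' m p) (h : ¬ IsConstF m p f) :
    ¬ p ∣ stabCard m p f := by
  classical
  intro hdvd
  set Hf : Subgroup (Equiv.Perm (Fin p)) :=
    { carrier := {σ | f ∘ ⇑σ = f}
      one_mem' := by simp
      mul_mem' := by
        intro a c ha hc
        simp only [Set.mem_setOf_eq] at *
        funext x
        rw [Equiv.Perm.coe_mul, Function.comp_apply, Function.comp_apply,
          ← Function.comp_apply (f := f) (g := ⇑a), ha,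
          ← Function.comp_apply (f := f) (g := ⇑c), hc]
      inv_mem' := by
        intro a ha
        simp only [Set.mem_setOf_eq] at *
        funext x
        have h1 := congrFun ha (a⁻¹ x)
        simp only [Function.comp_apply, Equiv.Perm.inv_def, Equiv.apply_symm_apply] at h1
        exact h1.symm } with hHf
  have hcard : Nat.card Hf = stabCard m p f := by
    rw [stabCard, Nat.card_eq_fintype_card]
    rw [← Fintype.card_subtype]
    apply Fintype.card_congr
    rfl
  haveI : Fact p.Prime := ⟨hp⟩
  haveI : Fintype Hf := Fintype.ofFinite _
  have hdvd' : p ∣ Fintype.card Hf := by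
    rw [← Nat.card_eq_fintype_card, hcard]; exact hdvd
  obtain ⟨g, hg⟩ := exists_prime_orderOf_dvd_card p hdvd'
  have hord : orderOf (g : Equiv.Perm (Fin p)) = p :=
    (orderOf_injective Hf.subtype Hf.subtype_injective g).trans hg
  have hmem : f ∘ ⇑(g : Equiv.Perm (Fin p)) = f := g.2
  set σ := (g : Equiv.Perm (Fin p)) with hσ
  have hcyc : σ.IsCycle := by
    apply Equiv.Perm.isCycle_of_prime_order'' (by simpa using hp)
    simpa using hord
  have hsupp : σ.support = Finset.univ := by
    apply Finset.eq_univ_of_card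
    rw [← hcyc.orderOf, hord, Fintype.card_fin]
  have hmoved : ∀ y : Fin p, σ y ≠ y := by
    intro y
    rw [← Equiv.Perm.mem_support, hsupp]
    exact Finset.mem_univ y
  obtain ⟨x, hx, hsame⟩ := hcyc
  apply h
  refine ⟨f x, fun j => ?_⟩
  obtain ⟨i, hi⟩ := hsame (hmoved j)
  rw [← hi]
  exact fix_zpow m p f σ hmem i x

open scoped Classical in
lemma constOrb_card (hp : 0 < p) :
    (Finset.univ.filter (fun ω : Orb m p => IsConstF m p ω.out)).card = m := by
  classical
  have himg : (Finset.univ.filter (fun ω : Orb m p => IsConstF m p ω.out))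
      = Finset.univ.image (fun i : Fin m => (⟦fun _ => i⟧ : Orb m p)) := by
    ext ω
    simp only [Finset.mem_filter, Finset.mem_univ, true_and, Finset.mem_image]
    constructor
    · rintro ⟨i, hi⟩
      have hout : ω.out = (fun _ => i : A' m p) := funext hi
      refine ⟨i, ?_⟩
      rw [← Quotient.out_eq ω, hout]
    · rintro ⟨i, rfl⟩
      obtain ⟨σ, hσ⟩ := Quotient.mk_out (s := osetoid m p) (fun _ => i : A' m p)
      exact ⟨i, fun j => congrFun hσ j⟩
  rw [himg, Finset.card_image_of_injective _ ?_, Finset.card_univ, Fintype.card_fin]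
  intro i j hij
  obtain ⟨σ, hσ⟩ := Quotient.exact hij
  exact congrFun hσ ⟨0, hp⟩

open scoped Classical in
lemma factorization_prod_nn (hp : p.Prime) :
    (∏ ω : Orb m p, nn m p ω).factorization p = m := by
  classical
  rw [Nat.factorization_prod (fun ω _ => (stabCard_pos m p ω.out).ne')]
  rw [Finset.sum_apply']
  rw [← Finset.sum_filter_add_sum_filter_not Finset.univ
    (fun ω : Orb m p => IsConstF m p ω.out)]
  have h1 : ∀ ω ∈ Finset.univ.filter (fun ω : Orb m p => IsConstF m p ω.out),
      (nn m p ω).factorization p = 1 := by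
    intro ω hω
    rw [nn, stab_const m p _ (Finset.mem_filter.mp hω).2, factorization_factorial_self p hp]
  have h2 : ∀ ω ∈ Finset.univ.filter (fun ω : Orb m p => ¬ IsConstF m p ω.out),
      (nn m p ω).factorization p = 0 := by
    intro ω hω
    exact Nat.factorization_eq_zero_of_not_dvd
      (stab_nonconst m p hp _ (Finset.mem_filter.mp hω).2)
  rw [Finset.sum_congr rfl h1, Finset.sum_congr rfl h2, Finset.sum_const, Finset.sum_const_zero,
    add_zero, smul_eq_mul, mul_one, constOrb_card m p hp.pos]

end Coord

/-! ### Part B: transport from the tensor power -/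

lemma card_quot_map {R M N : Type*} [CommRing R] [AddCommGroup M] [AddCommGroup N]
    [Module R M] [Module R N] (E : M ≃ₗ[R] N) (P Q : Submodule R M) :
    Nat.card (↥P ⧸ Q.comap P.subtype)
      = Nat.card (↥(P.map (E : M →ₗ[R] N)) ⧸
          (Q.map (E : M →ₗ[R] N)).comap (P.map (E : M →ₗ[R] N)).subtype) := by
  refine Nat.card_congr (Submodule.Quotient.equiv _ _ (E.submoduleMap P) ?_).toEquiv
  ext x
  simp only [Submodule.mem_map, Submodule.mem_comap]
  constructor
  · rintro ⟨y, hy, rfl⟩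
    have hy' : (y : M) ∈ Q := hy
    exact ⟨y.1, hy', (E.submoduleMap_apply P y).symm⟩
  · rintro ⟨y, hyQ, hEy⟩
    have hyP : y ∈ P := by
      obtain ⟨y', hy', hEy'⟩ := x.2
      have : y' = y := E.injective (hEy'.trans hEy.symm)
      rwa [← this]
    refine ⟨⟨y, hyP⟩, hyQ, ?_⟩
    apply Subtype.ext
    exact hEy

section Tensor

variable {M : Type*} [AddCommGroup M] [Module ℤ M] {m : ℕ} (b : Module.Basis (Fin m) ℤ M) (p : ℕ)

noncomputable def coordML : MultilinearMap ℤ (fun _ : Fin p => M) (F' m p) :=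
  MultilinearMap.pi fun f =>
    (MultilinearMap.mkPiAlgebra ℤ (Fin p) ℤ).compLinearMap (fun i => b.coord (f i))

noncomputable def EL : PiTensorProduct ℤ (fun _ : Fin p => M) →ₗ[ℤ] F' m p :=
  PiTensorProduct.lift (coordML b p)

lemma EL_tprod (x : Fin p → M) (g : A' m p) :
    EL b p (PiTensorProduct.tprod ℤ x) g = ∏ i, b.repr (x i) (g i) := by
  simp [EL, coordML, PiTensorProduct.lift.tprod, Module.Basis.coord_apply]

noncomputable def Bv (g : A' m p) : PiTensorProduct ℤ (fun _ : Fin p => M) :=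
  PiTensorProduct.tprod ℤ (fun i => b (g i))

lemma EL_Bv (g h : A' m p) :
    EL b p (Bv b p g) h = if g = h then 1 else 0 := by
  rw [Bv, EL_tprod]
  by_cases hgh : g = h
  · subst hgh
    simp
  · obtain ⟨i, hi⟩ := Function.ne_iff.mp hgh
    rw [if_neg hgh]
    apply Finset.prod_eq_zero (Finset.mem_univ i)
    simp [Finsupp.single_apply, hi]

noncomputable def GG : F' m p →ₗ[ℤ] PiTensorProduct ℤ (fun _ : Fin p => M) :=
  ∑ g : A' m p, (LinearMap.toSpanSingleton ℤ _ (Bv b p g)).comp (LinearMap.proj g)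

lemma GG_apply (c : F' m p) : GG b p c = ∑ g : A' m p, c g • Bv b p g := by
  simp [GG, LinearMap.sum_apply, LinearMap.toSpanSingleton_apply, LinearMap.proj_apply]

lemma tprod_expand (x : Fin p → M) :
    (PiTensorProduct.tprod ℤ (s := fun _ : Fin p => M)) x
      = ∑ g : A' m p, (∏ i, b.repr (x i) (g i)) • Bv b p g := by
  have hx := funext fun i => (b.sum_repr (x i)).symm
  conv_lhs => rw [hx]
  rw [MultilinearMap.map_sum]
  exact Finset.sum_congr rfl fun g _ => MultilinearMap.map_smul_univ _ _ _

noncomputable def EE : PiTensorProduct ℤ (fun _ : Fin p => M) ≃ₗ[ℤ] F' m p :=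
  LinearEquiv.ofLinear (EL b p) (GG b p)
    (by
      apply LinearMap.ext
      intro c
      rw [LinearMap.comp_apply, GG_apply, map_sum, LinearMap.id_apply]
      funext h
      rw [Finset.sum_apply]
      have key : ∀ g ∈ Finset.univ,
          (EL b p (c g • Bv b p g)) h = if g = h then c g else 0 := by
        intro g _
        rw [map_smul]
        have : (c g • EL b p (Bv b p g)) h = c g * EL b p (Bv b p g) h := rfl
        rw [this, EL_Bv]
        split <;> ring
      rw [Finset.sum_congr rfl key, Finset.sum_ite_eq' Finset.univ h c]
      simp)
    (by
      refine PiTensorProduct.ext (MultilinearMap.ext fun x => ?_)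
      simp only [LinearMap.compMultilinearMap_apply, LinearMap.comp_apply, LinearMap.id_apply]
      rw [GG_apply]
      conv_rhs => rw [tprod_expand b p x]
      exact Finset.sum_congr rfl fun g _ => by rw [EL_tprod])

lemma EE_apply (t : PiTensorProduct ℤ (fun _ : Fin p => M)) : EE b p t = EL b p t := rfl

lemma EL_perm (σ : Equiv.Perm (Fin p)) :
    (EL b p).comp (permMap ℤ M p σ) = (PL m p σ).comp (EL b p) := by
  refine PiTensorProduct.ext (MultilinearMap.ext fun x => ?_)
  simp only [LinearMap.compMultilinearMap_apply, LinearMap.comp_apply]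
  have h1 : permMap ℤ M p σ (PiTensorProduct.tprod ℤ x)
      = PiTensorProduct.tprod ℤ (fun i => x (σ.symm i)) := by
    rw [permMap]
    exact PiTensorProduct.reindex_tprod σ x
  rw [h1]
  funext h
  rw [EL_tprod, PL_apply, EL_tprod]
  refine Eq.trans (Finset.prod_congr rfl fun i _ => ?_)
    (Equiv.prod_comp σ.symm (fun i => b.repr (x i) ((h ∘ ⇑σ) i)))
  simp

lemma EE_perm (σ : Equiv.Perm (Fin p)) (t : PiTensorProduct ℤ (fun _ : Fin p => M)) :
    EE b p (permMap ℤ M p σ t) = PL m p σ (EE b p t) := by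
  rw [EE_apply, EE_apply]
  exact LinearMap.congr_fun (EL_perm b p σ) t

lemma EE_symmetrize (t : PiTensorProduct ℤ (fun _ : Fin p => M)) :
    EE b p (symmetrize ℤ M p t) = SigF m p (EE b p t) := by
  rw [symmetrize, SigF, LinearMap.sum_apply, LinearMap.sum_apply, map_sum]
  exact Finset.sum_congr rfl fun σ _ => EE_perm b p σ t

lemma map_symT :
    (symTensors ℤ M p).map ((EE b p : _ ≃ₗ[ℤ] F' m p) : _ →ₗ[ℤ] F' m p) = SF m p := by
  ext z
  rw [Submodule.mem_map_equiv]
  simp only [symTensors, SF, Submodule.mem_iInf, LinearMap.mem_eqLocus, LinearMap.id_coe, id_eq]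
  constructor
  · intro h σ
    have h1 := congrArg (EE b p) (h σ)
    rw [EE_perm, (EE b p).apply_symm_apply] at h1
    exact h1
  · intro h σ
    apply (EE b p).injective
    rw [EE_perm, (EE b p).apply_symm_apply, h σ]

lemma map_rangeSym :
    (LinearMap.range (symmetrize ℤ M p)).map (EE b p : _ →ₗ[ℤ] F' m p)
      = LinearMap.range (SigF m p) := by
  ext z
  rw [Submodule.mem_map_equiv]
  simp only [LinearMap.mem_range]
  constructor
  · rintro ⟨t, ht⟩
    refine ⟨EE b p t, ?_⟩
    rw [← EE_symmetrize, ht, (EE b p).apply_symm_apply]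
  · rintro ⟨y, hy⟩
    refine ⟨(EE b p).symm y, ?_⟩
    apply (EE b p).injective
    rw [EE_symmetrize, (EE b p).apply_symm_apply, (EE b p).apply_symm_apply, hy]

end Tensor

end Stmt14

/-- For `M` free of rank `m` over `ℤ` and `p` prime, the highest power of `p`
dividing the index `|S'_p(M)/S''_p(M)|` is exactly `p^m`. -/
theorem stmt_14 (M : Type*) [AddCommGroup M] [Module ℤ M] (m : ℕ)
    (b : Module.Basis (Fin m) ℤ M) (p : ℕ) (hp : p.Prime) :
    p ^ m ∣
      Nat.card
        (↥(symTensors ℤ M p) ⧸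
          (LinearMap.range (symmetrize ℤ M p)).comap (symTensors ℤ M p).subtype) ∧
    ¬ p ^ (m + 1) ∣
      Nat.card
        (↥(symTensors ℤ M p) ⧸
          (LinearMap.range (symmetrize ℤ M p)).comap (symTensors ℤ M p).subtype) := by
  classical
  set N := Nat.card
      (↥(symTensors ℤ M p) ⧸
        (LinearMap.range (symmetrize ℤ M p)).comap (symTensors ℤ M p).subtype) with hNdef
  have hN : N = ∏ ω : Stmt14.Orb m p, Stmt14.nn m p ω := by
    rw [hNdef, Stmt14.card_quot_map (Stmt14.EE b p) (symTensors ℤ M p)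
      (LinearMap.range (symmetrize ℤ M p)), Stmt14.map_symT, Stmt14.map_rangeSym,
      Stmt14.card_SFquot]
  have hN0 : N ≠ 0 := by
    rw [hN]
    exact (Finset.prod_pos fun ω _ => Stmt14.stabCard_pos m p ω.out).ne'
  have hfac : N.factorization p = m := by
    rw [hN]
    exact Stmt14.factorization_prod_nn m p hp
  constructor
  · rw [Nat.Prime.pow_dvd_iff_le_factorization hp hN0, hfac]
  · rw [Nat.Prime.pow_dvd_iff_le_factorization hp hN0, hfac]
    omega
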